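/- Let n ≥ 3 and let v be a positive smooth function on a domain Ω ⊂ ℝⁿ satisfying v·Δv = (n/2)(|∇v|² − 1). Suppose at a point x₀ ∈ Ω there is a unit vector e with ∂²_{ee}v(x₀) = 0, v(x₀) ≤ L·∂_e v(x₀) for some L > 0, and ∂_e v(x₀) > 0. Then the Ricci component of g = v⁻²g_E in the direction v·e at x₀ satisfies R_{ee} ≤ −((n−2)/2)·(∂_e v(x₀))², and hence R_{ee} → −∞ along any sequence of such points where ∂_e v → ∞. -/

import Mathlib

open scoped BigOperators

noncomputable def pd {n : ℕ} (i : Fin n) (f : (Fin n → ℝ) → ℝ) (x : Fin n → ℝ) : ℝ :=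
  fderiv ℝ f x (Pi.single i 1)

noncomputable def pd2 {n : ℕ} (i j : Fin n) (f : (Fin n → ℝ) → ℝ) (x : Fin n → ℝ) : ℝ :=
  pd i (fun y => pd j f y) x

noncomputable def lap {n : ℕ} (f : (Fin n → ℝ) → ℝ) (x : Fin n → ℝ) : ℝ :=
  ∑ i, pd2 i i f x

noncomputable def gradSq {n : ℕ} (f : (Fin n → ℝ) → ℝ) (x : Fin n → ℝ) : ℝ :=
  ∑ i, (pd i f x) ^ 2

/-- Directional derivative `∂_e f`. -/
noncomputable def dirD {n : ℕ} (e : Fin n → ℝ) (f : (Fin n → ℝ) → ℝ) (x : Fin n → ℝ) : ℝ :=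
  fderiv ℝ f x e

/-- Second directional derivative `∂²_{ee} f`. -/
noncomputable def dirD2 {n : ℕ} (e : Fin n → ℝ) (f : (Fin n → ℝ) → ℝ) (x : Fin n → ℝ) : ℝ :=
  fderiv ℝ (fun y => fderiv ℝ f y e) x e

/-- The Ricci component of `g = v⁻² g_E` in the `g`-unit direction `v·e`
(for a Euclidean-unit vector `e`):
`R_{ee} = (n−2) v ∂²_{ee}v − (n−2)/2 · |∇v|² − n/2`. -/
noncomputable def ricDir {n : ℕ} (v : (Fin n → ℝ) → ℝ) (e : Fin n → ℝ)
    (x : Fin n → ℝ) : ℝ :=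
  ((n : ℝ) - 2) * v x * dirD2 e v x - (((n : ℝ) - 2) / 2) * gradSq v x - (n : ℝ) / 2

lemma dirD_sq_le_gradSq {n : ℕ} (v : (Fin n → ℝ) → ℝ) (e : Fin n → ℝ)
    (he : (∑ i, (e i) ^ 2) = 1) (x : Fin n → ℝ) :
    (dirD e v x) ^ 2 ≤ gradSq v x := by
  have hdecomp : dirD e v x = ∑ i, e i * pd i v x := by
    have he' : e = ∑ i, e i • (Pi.single i (1 : ℝ) : Fin n → ℝ) := by
      funext j
      simp [Pi.single_apply, Finset.sum_apply]
    rw [dirD, he']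
    rw [map_sum]
    simp [pd, Pi.single_apply, mul_ite, Finset.sum_ite_eq']
  calc (dirD e v x) ^ 2 = (∑ i, e i * pd i v x) ^ 2 := by rw [hdecomp]
    _ ≤ (∑ i, (e i) ^ 2) * ∑ i, (pd i v x) ^ 2 :=
        Finset.sum_mul_sq_le_sq_mul_sq _ _ _
    _ = gradSq v x := by rw [he, one_mul, gradSq]

theorem stmt16 {n : ℕ} (hn : 3 ≤ n) (Ω : Set (Fin n → ℝ)) (hΩ : IsOpen Ω)
    (v : (Fin n → ℝ) → ℝ) (hv : ContDiffOn ℝ (⊤ : ℕ∞) v Ω)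
    (hvpos : ∀ x ∈ Ω, 0 < v x)
    (hpde : ∀ x ∈ Ω, v x * lap v x = ((n : ℝ) / 2) * (gradSq v x - 1)) :
    (∀ x₀ ∈ Ω, ∀ e : Fin n → ℝ, (∑ i, (e i) ^ 2) = 1 →
      dirD2 e v x₀ = 0 →
      (∃ L : ℝ, 0 < L ∧ v x₀ ≤ L * dirD e v x₀) →
      0 < dirD e v x₀ →
      ricDir v e x₀ ≤ -(((n : ℝ) - 2) / 2) * (dirD e v x₀) ^ 2) ∧
    (∀ (x : ℕ → Fin n → ℝ) (e : ℕ → Fin n → ℝ),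
      (∀ k, x k ∈ Ω ∧ (∑ i, (e k i) ^ 2) = 1 ∧ dirD2 (e k) v (x k) = 0 ∧
        (∃ L : ℝ, 0 < L ∧ v (x k) ≤ L * dirD (e k) v (x k)) ∧ 0 < dirD (e k) v (x k)) →
      Filter.Tendsto (fun k => dirD (e k) v (x k)) Filter.atTop Filter.atTop →
      Filter.Tendsto (fun k => ricDir v (e k) (x k)) Filter.atTop Filter.atBot) := by
  have hn2 : (0:ℝ) < ((n:ℝ) - 2) / 2 := by
    have : (3:ℝ) ≤ n := by exact_mod_cast hn
    linarith
  have key : ∀ x₀ ∈ Ω, ∀ e : Fin n → ℝ, (∑ i, (e i) ^ 2) = 1 →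
      dirD2 e v x₀ = 0 →
      ricDir v e x₀ ≤ -(((n : ℝ) - 2) / 2) * (dirD e v x₀) ^ 2 := by
    intro x₀ hx₀ e he h2
    have hcs := dirD_sq_le_gradSq v e he x₀
    have hnpos : (0:ℝ) < (n:ℝ) / 2 := by positivity
    rw [ricDir, h2]
    nlinarith
  refine ⟨fun x₀ hx₀ e he h2 _ _ => key x₀ hx₀ e he h2, ?_⟩
  intro x e hk htend
  have hb : ∀ k, ricDir v (e k) (x k) ≤ -(((n : ℝ) - 2) / 2) * (dirD (e k) v (x k)) ^ 2 :=
    fun k => key (x k) (hk k).1 (e k) (hk k).2.1 (hk k).2.2.1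
  have hsq : Filter.Tendsto (fun k => (dirD (e k) v (x k)) ^ 2) Filter.atTop Filter.atTop := by
    simpa [sq] using htend.atTop_mul_atTop₀ htend
  have hneg : Filter.Tendsto (fun k => -(((n : ℝ) - 2) / 2) * (dirD (e k) v (x k)) ^ 2)
      Filter.atTop Filter.atBot := by
    have := hsq.const_mul_atTop hn2
    simpa [neg_mul] using Filter.tendsto_neg_atBot_iff.mpr this
  exact Filter.tendsto_atBot_mono hb hneg
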